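/- Let R be a commutative ring, G, π, φ as above, and let tr_n: M_n(R[G]) → R[π_{φ'}] be defined by tr_n(A) = Σ_i tr(a_ii), where tr is the twisted trace on R[G]. Then for matrices A ∈ M_{m×n}(R[G]) and B ∈ M_{n×m}(R[G]), tr_m(A·B) = tr_n(φ(B)·A), where φ is applied entrywise. -/

import Mathlib

open scoped Classical

/-- Twisted conjugacy relation on `π`: `a ∼ b` iff `b = φ(γ) a γ⁻¹` for some `γ ∈ G`. -/
def twRel {G : Type} [Group G] (π : Subgroup G) (φ : G →* G) (a b : ↥π) : Prop :=
  ∃ γ : G, (b : G) = φ γ * ↑a * γ⁻¹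

/-- The set of twisted conjugacy classes `π_{φ'}`. -/
def TwCl {G : Type} [Group G] (π : Subgroup G) (φ : G →* G) := Quot (twRel π φ)

/-- The twisted trace `tr : R[G] → R[π_{φ'}]`, sending `Σ r_g·g` to `Σ_{g ∈ π} r_g·[g]`. -/
noncomputable def twTr (R : Type) {G : Type} [CommRing R] [Group G] (π : Subgroup G)
    (φ : G →* G) (a : MonoidAlgebra R G) : TwCl π φ →₀ R :=
  Finsupp.sum a.coeff fun g r =>
    if h : g ∈ π then Finsupp.single (Quot.mk (twRel π φ) ⟨g, h⟩) r else 0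


section
variable (R G : Type) [CommRing R] [Group G] (π : Subgroup G) (φ : G →* G)

lemma twTr_zero : twTr R π φ 0 = 0 := by simp [twTr]

lemma twTr_add (a b : MonoidAlgebra R G) :
    twTr R π φ (a + b) = twTr R π φ a + twTr R π φ b := by
  unfold twTr TwCl
  rw [MonoidAlgebra.coeff_add]
  apply Finsupp.sum_add_index' <;> intros <;> split_ifs <;> simp [Finsupp.single_add]

lemma twTr_sum {ι : Type} (s : Finset ι) (f : ι → MonoidAlgebra R G) :
    twTr R π φ (∑ i ∈ s, f i) = ∑ i ∈ s, twTr R π φ (f i) := by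
  classical
  induction s using Finset.induction with
  | empty => simp [twTr_zero]
  | insert a s h ih => rw [Finset.sum_insert h, Finset.sum_insert h, twTr_add, ih]

lemma twTr_single (g : G) (r : R) :
    twTr R π φ (MonoidAlgebra.single g r) =
      if h : g ∈ π then Finsupp.single (Quot.mk (twRel π φ) ⟨g, h⟩) r else 0 := by
  unfold twTr TwCl
  rw [MonoidAlgebra.coeff_single, Finsupp.sum_single_index]
  split_ifs <;> simp

lemma mem_key [π.Normal] (hquot : ∀ g : G, φ g * g⁻¹ ∈ π) (g h : G) :
    g * h ∈ π ↔ φ h * g ∈ π := by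
  have hn : π.Normal := inferInstance
  constructor
  · intro hm
    have h1 : h * g ∈ π := by
      have := hn.conj_mem _ hm h
      simpa [mul_assoc] using this
    have : (φ h * h⁻¹) * (h * g) ∈ π := π.mul_mem (hquot h) h1
    simpa [mul_assoc] using this
  · intro hm
    have h1 : h * g ∈ π := by
      have := π.mul_mem (π.inv_mem (hquot h)) hm
      simpa [mul_assoc, mul_inv_rev] using this
    have := hn.conj_mem _ h1 h⁻¹
    simpa [mul_assoc] using this

lemma twTr_mul_comm [π.Normal] (hquot : ∀ g : G, φ g * g⁻¹ ∈ π)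
    (a b : MonoidAlgebra R G) :
    twTr R π φ (a * b) = twTr R π φ (MonoidAlgebra.mapDomainRingHom R φ b * a) := by
  induction a using MonoidAlgebra.induction_linear with
  | zero => simp [twTr_zero]
  | add f g hf hg => rw [add_mul, mul_add, twTr_add, twTr_add, hf, hg]
  | single g r =>
    induction b using MonoidAlgebra.induction_linear with
    | zero => simp [twTr_zero]
    | add f g' hf hg => rw [mul_add, map_add, add_mul, twTr_add, twTr_add, hf, hg]
    | single h s =>
      have hmap : MonoidAlgebra.mapDomainRingHom R φ (MonoidAlgebra.single h s)
          = MonoidAlgebra.single (φ h) s := by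
        simp [MonoidAlgebra.mapDomainRingHom, Finsupp.mapDomain_single]
      rw [hmap]
      rw [MonoidAlgebra.single_mul_single, MonoidAlgebra.single_mul_single]
      rw [twTr_single, twTr_single]
      by_cases hmem : g * h ∈ π
      · have hmem' : φ h * g ∈ π := (mem_key G π φ hquot g h).mp hmem
        rw [dif_pos hmem, dif_pos hmem', mul_comm r s]
        congr 1
        apply Quot.sound
        exact ⟨h, by group⟩
      · have hmem' : ¬ φ h * g ∈ π := fun hc => hmem ((mem_key G π φ hquot g h).mpr hc)
        rw [dif_neg hmem, dif_neg hmem']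
end

noncomputable def twTrMat (R : Type) {G : Type} [CommRing R] [Group G] (π : Subgroup G)
    (φ : G →* G) {ι : Type} [Fintype ι] (A : Matrix ι ι (MonoidAlgebra R G)) :
    TwCl π φ →₀ R :=
  ∑ i, twTr R π φ (A i i)

/-- `tr_m(A·B) = tr_n(φ(B)·A)` for rectangular matrices over `R[G]`, `φ` applied
entrywise. -/
theorem statement5 (R G : Type) [CommRing R] [Group G] (π : Subgroup G) [π.Normal]
    (φ : G →* G) (hres : ∀ g ∈ π, φ g ∈ π) (hquot : ∀ g : G, φ g * g⁻¹ ∈ π) :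
    ∀ (m n : ℕ) (A : Matrix (Fin m) (Fin n) (MonoidAlgebra R G))
      (B : Matrix (Fin n) (Fin m) (MonoidAlgebra R G)),
      twTrMat R π φ (A * B) =
        twTrMat R π φ (B.map ⇑(MonoidAlgebra.mapDomainRingHom R φ) * A) := by
  intro m n A B
  unfold twTrMat
  simp only [Matrix.mul_apply, twTr_sum, Matrix.map_apply]
  rw [Finset.sum_comm]
  exact Finset.sum_congr rfl fun j _ => Finset.sum_congr rfl fun i _ =>
    twTr_mul_comm R G π φ hquot (A i j) (B j i)
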